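/- Every positive integer m can be written as a sum of Lagonacci numbers with distinct indices (completeness of the Lagonacci numeration system). -/

import Mathlib

/-- The Lagonacci sequence: `Z 0 = 1, Z 1 = 2, Z 2 = 3`, `Z (n+3) = Z (n+1) + Z n`. -/
def Z : ℕ → ℕ
  | 0 => 1
  | 1 => 2
  | 2 => 3
  | n + 3 => Z (n + 1) + Z n

theorem Z_pos : ∀ n, 0 < Z n
  | 0 => by simp [Z]
  | 1 => by simp [Z]
  | 2 => by simp [Z]
  | n + 3 => by
      have := Z_pos n
      simp [Z]; omega

/-- The index of the largest Lagonacci number not exceeding `m`. -/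
def greedyIndex (m : ℕ) : ℕ := Nat.findGreatest (fun j => Z j ≤ m) m

theorem greedy_le {m : ℕ} (hm : 1 ≤ m) : Z (greedyIndex m) ≤ m :=
  Nat.findGreatest_spec (P := fun j => Z j ≤ m) (Nat.zero_le m) (by simpa [Z] using hm)

/-- The list of indices produced by the greedy algorithm on `m`. -/
def greedyList : ℕ → List ℕ
  | 0 => []
  | m + 1 => greedyIndex (m + 1) :: greedyList (m + 1 - Z (greedyIndex (m + 1)))
decreasing_by
  have h1 := Z_pos (greedyIndex (m + 1))
  omega

/-- The number of summands in the greedy Lagonacci decomposition of `m`. -/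
def k (m : ℕ) : ℕ := (greedyList m).length

theorem Z_le_two : ∀ n, Z n ≤ Z (n + 2)
  | 0 => by simp [Z]
  | 1 => by simp [Z]
  | 2 => by simp [Z]
  | n + 3 => by
      have := Z_pos (n + 2)
      simp [Z]

theorem Z_mono_succ : ∀ n, Z n ≤ Z (n + 1)
  | 0 => by simp [Z]
  | 1 => by simp [Z]
  | 2 => by simp [Z]
  | n + 3 => by
      have := Z_le_two n
      have e1 : Z (n + 1 + 1) = Z (n + 2) := rfl
      have e2 : Z (n + 1 + 2) = Z (n + 3) := rfl
      simp [Z]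
      omega

theorem Z_add_le : ∀ n, Z (n + 2) ≤ Z (n + 1) + Z n
  | 0 => by simp [Z]
  | 1 => by simp [Z]
  | n + 2 => by
      have := Z_le_two (n + 1)
      have e1 : Z (n + 1 + 1) = Z (n + 2) := rfl
      have e2 : Z (n + 1 + 2) = Z (n + 3) := rfl
      simp [Z]
      omega

theorem Z_succ_le_two_mul (n : ℕ) : Z (n + 1) ≤ 2 * Z n := by
  cases n with
  | zero => simp [Z]
  | succ k =>
      have h1 := Z_add_le k
      have h2 := Z_mono_succ k
      have e1 : Z (k + 1 + 1) = Z (k + 2) := rfl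
      omega

theorem lt_Z_succ : ∀ n, n < Z (n + 1)
  | 0 => by simp [Z]
  | 1 => by simp [Z]
  | 2 => by simp [Z]
  | 3 => by simp [Z]
  | n + 4 => by
      have h1 := lt_Z_succ (n + 2)
      have h2 := lt_Z_succ (n + 1)
      have e1 : Z (n + 2 + 1) = Z (n + 3) := rfl
      have e2 : Z (n + 1 + 1) = Z (n + 2) := rfl
      have e3 : Z (n + 3) = Z (n + 1) + Z n := rfl
      simp [Z]
      omega

theorem key : ∀ n, ∀ m < Z n, ∃ S ⊆ Finset.range n, m = ∑ j ∈ S, Z j := by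
  intro n
  induction n with
  | zero =>
      intro m hm
      simp [Z] at hm
      exact ⟨∅, by simp, by simp [hm]⟩
  | succ n ih =>
      intro m hm
      by_cases h : m < Z n
      · obtain ⟨S, hS, hsum⟩ := ih m h
        exact ⟨S, hS.trans (Finset.range_subset_range.2 (Nat.le_succ n)), hsum⟩
      · push_neg at h
        have h2 := Z_succ_le_two_mul n
        obtain ⟨S, hS, hsum⟩ := ih (m - Z n) (by omega)
        have hn : n ∉ S := fun hc => by simpa using hS hc
        refine ⟨insert n S, ?_, ?_⟩
        · intro x hx
          rcases Finset.mem_insert.1 hx with rfl | hx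
          · exact Finset.self_mem_range_succ x
          · exact (Finset.range_subset_range.2 (Nat.le_succ n)) (hS hx)
        · rw [Finset.sum_insert hn, ← hsum]
          omega

/-- Completeness: every positive integer is a sum of Lagonacci numbers with
distinct indices. -/
theorem lagonacci_complete (m : ℕ) (hm : 1 ≤ m) :
    ∃ S : Finset ℕ, m = ∑ j ∈ S, Z j := by
  obtain ⟨S, _, hsum⟩ := key (m + 1) m (lt_Z_succ m)
  exact ⟨S, hsum⟩
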